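/- Let d ≥ 1 and let p, q be natural numbers with p < d. Then there is no map f : Fin(d+1) → ℝ^p × ℝ^q such that ⟨f(i) − f(j), f(i) − f(j)⟩_{p,q} = 1 for all i ≠ j, where ⟨(u⁺,u⁻),(v⁺,v⁻)⟩_{p,q} = ⟨u⁺,v⁺⟩ − ⟨u⁻,v⁻⟩ is the bilinear form of signature (p,q). In other words, the 1-skeleton of the standard d-dimensional simplex (with all squared edge lengths equal to 1) admits no simplicial isometric map into the Minkowski space ℝ^p_q with p < d. -/

import Mathlib

/-- The indefinite bilinear form of signature `(p, q)` on `ℝ^p × ℝ^q`. -/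
noncomputable def mformPQ (p q : ℕ)
    (u v : EuclideanSpace ℝ (Fin p) × EuclideanSpace ℝ (Fin q)) : ℝ :=
  inner ℝ u.1 v.1 - inner ℝ u.2 v.2

/-- optimality of the target dimension.  For `p < d` there is no map
of the vertices of the standard `d`-simplex into `ℝ^p_q` in which all the squared edge
lengths equal `1`. -/
theorem no_isometric_map_of_simplex_skeleton (d p q : ℕ) (hd : 1 ≤ d) (hp : p < d) :
    ¬ ∃ f : Fin (d + 1) → EuclideanSpace ℝ (Fin p) × EuclideanSpace ℝ (Fin q),
      ∀ i j : Fin (d + 1), i ≠ j → mformPQ p q (f i - f j) (f i - f j) = 1 := by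
  rintro ⟨f, hf⟩
  set v : Fin d → EuclideanSpace ℝ (Fin p) × EuclideanSpace ℝ (Fin q) :=
    fun i => f i.succ - f 0 with hv
  have hv1 : ∀ i : Fin d, mformPQ p q (v i) (v i) = 1 := fun i =>
    hf i.succ 0 (Fin.succ_ne_zero i)
  have hvij : ∀ i j : Fin d, i ≠ j → mformPQ p q (v i) (v j) = 1/2 := by
    intro i j hij
    have hsub : v i - v j = f i.succ - f j.succ := by simp [hv]
    have h2 : mformPQ p q (v i - v j) (v i - v j) = 1 := by
      rw [hsub]; exact hf i.succ j.succ (by simpa using hij)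
    have hexp : mformPQ p q (v i - v j) (v i - v j)
        = mformPQ p q (v i) (v i) - 2 * mformPQ p q (v i) (v j)
          + mformPQ p q (v j) (v j) := by
      simp only [mformPQ, Prod.fst_sub, Prod.snd_sub, inner_sub_left, inner_sub_right]
      rw [real_inner_comm (v j).1 (v i).1, real_inner_comm (v j).2 (v i).2]
      ring
    rw [hv1 i, hv1 j, h2] at hexp
    linarith
  have hm : ∀ i j : Fin d, mformPQ p q (v i) (v j) = if i = j then 1 else 1/2 := by
    intro i j
    by_cases h : i = j
    · simp [h, hv1 j]
    · simp [h, hvij i j h]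
  -- the plus parts are linearly dependent
  have hcard : Module.finrank ℝ (EuclideanSpace ℝ (Fin p)) < Fintype.card (Fin d) := by
    simpa using hp
  have hnli : ¬ LinearIndependent ℝ (fun i : Fin d => (v i).1) := by
    intro h
    exact absurd (h.fintype_card_le_finrank) (not_le.2 hcard)
  rw [Fintype.not_linearIndependent_iff] at hnli
  obtain ⟨c, hc0, i0, hi0⟩ := hnli
  set w := ∑ i, c i • v i with hw
  have hw1 : w.1 = 0 := by
    simp only [hw, Prod.fst_sum, Prod.smul_fst]
    exact hc0
  have hle : mformPQ p q w w ≤ 0 := by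
    simp only [mformPQ, hw1, inner_zero_left, zero_sub, neg_nonpos]
    exact real_inner_self_nonneg
  have hexpand : mformPQ p q w w
      = ∑ i, ∑ j, c i * c j * mformPQ p q (v i) (v j) := by
    simp only [mformPQ, hw, Prod.fst_sum, Prod.snd_sum, Prod.smul_fst, Prod.smul_snd,
      sum_inner, inner_sum, real_inner_smul_left, real_inner_smul_right,
      ← Finset.sum_sub_distrib]
    congr 1; ext i; congr 1; ext j
    rw [real_inner_comm (v j).1 (v i).1, real_inner_comm (v j).2 (v i).2]
    ring
  have hkey : ∑ i, ∑ j, c i * c j * mformPQ p q (v i) (v j)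
      = (1/2) * (∑ i, c i)^2 + (1/2) * ∑ i, (c i)^2 := by
    have hrw : ∀ i j : Fin d, c i * c j * mformPQ p q (v i) (v j)
        = c i * c j * (1/2) + (if i = j then c i * c j * (1/2) else 0) := by
      intro i j
      rw [hm i j]
      split <;> ring
    simp_rw [hrw, Finset.sum_add_distrib, Finset.sum_ite_eq, Finset.mem_univ, if_true]
    have e1 : ∑ x : Fin d, ∑ y : Fin d, c x * c y * (1/2:ℝ)
        = (∑ x : Fin d, c x) * (∑ y : Fin d, c y) * (1/2) := by
      simp_rw [← Finset.sum_mul]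
      rw [Finset.sum_mul_sum]
    have e2 : ∑ i : Fin d, c i * c i * (1/2:ℝ) = (1/2) * ∑ i : Fin d, (c i)^2 := by
      rw [Finset.mul_sum]
      exact Finset.sum_congr rfl fun i _ => by ring
    rw [e1, e2]
    ring
  have hpos : 0 < (1/2) * (∑ i, c i)^2 + (1/2) * ∑ i, (c i)^2 := by
    have h1 : 0 < ∑ i, (c i)^2 :=
      Finset.sum_pos' (fun i _ => sq_nonneg _) ⟨i0, Finset.mem_univ _, by positivity⟩
    nlinarith [sq_nonneg (∑ i, c i)]
  rw [hexpand, hkey] at hle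
  linarith
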